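/- A priori estimate for the Kazdan–Warner equation: Let h : V → ℝ and c ∈ ℝ satisfy: (1) if c > 0 then h is positive somewhere; (2) if c = 0 then h changes sign (is positive somewhere and negative somewhere) and ∫_V h dμ < 0; (3) if c < 0 then h is negative somewhere. Then there exists a constant C > 0 (depending only on h, c, V, ω and μ) such that every solution u : V → ℝ of −Δu(x) = h(x)e^{u(x)} − c for all x ∈ V satisfies max_{x∈V} |u(x)| ≤ C. -/

import Mathlib

open Finset Real

/-- The graph Laplacian: `Δu(x) = (1/μ x) * Σ_y ω x y * (u y - u x)`. -/
noncomputable def graphLap {V : Type*} [Fintype V] (ω : V → V → ℝ) (μ : V → ℝ)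
    (u : V → ℝ) (x : V) : ℝ :=
  (1 / μ x) * ∑ y, ω x y * (u y - u x)

/-- The integral of `f` over `V` with respect to the vertex measure `μ`. -/
noncomputable def graphInt {V : Type*} [Fintype V] (μ : V → ℝ) (f : V → ℝ) : ℝ :=
  ∑ x, f x * μ x

/-- Connectivity: any two distinct vertices are joined by a chain of positively
weighted edges. -/
def graphConn {V : Type*} (ω : V → V → ℝ) : Prop :=
  ∀ x y : V, x ≠ y → ∃ (m : ℕ) (p : ℕ → V), p 0 = x ∧ p m = y ∧
    ∀ i < m, 0 < ω (p i) (p (i + 1))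

/-- The gradient form `Γ(u,v)(x)`. -/
noncomputable def graphGamma {V : Type*} [Fintype V] (ω : V → V → ℝ) (μ : V → ℝ)
    (u v : V → ℝ) (x : V) : ℝ :=
  (1 / (2 * μ x)) * ∑ y, ω x y * (u y - u x) * (v y - v x)

/-- The length of the gradient: `|∇u|(x) = √(Γ(u,u)(x))`. -/
noncomputable def graphGradNorm {V : Type*} [Fintype V] (ω : V → V → ℝ) (μ : V → ℝ)
    (u : V → ℝ) (x : V) : ℝ :=
  Real.sqrt (graphGamma ω μ u u x)

/-- The functional `J_{h,f}(u) = ∫_V (½|∇u|² + f·u − h·e^u) dμ`. -/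
noncomputable def Jfunc {V : Type*} [Fintype V] (ω : V → V → ℝ) (μ : V → ℝ)
    (h f : V → ℝ) (u : V → ℝ) : ℝ :=
  graphInt μ (fun x => (1 / 2) * (graphGradNorm ω μ u x) ^ 2 + f x * u x - h x * Real.exp (u x))


lemma exp_ge_sq_div_four {s : ℝ} (hs : 0 ≤ s) : s ^ 2 / 4 ≤ Real.exp s := by
  have h1 : s / 2 + 1 ≤ Real.exp (s / 2) := Real.add_one_le_exp (s / 2)
  have h2 : Real.exp s = Real.exp (s / 2) * Real.exp (s / 2) := by
    rw [← Real.exp_add]; ring_nf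
  nlinarith [Real.exp_pos (s / 2)]

lemma quad_bound {t a b : ℝ} (ht : 0 ≤ t) (ha : 0 ≤ a) (hb : 0 ≤ b)
    (h : t ^ 2 ≤ a + b * t) : t ≤ b + Real.sqrt a := by
  by_contra hcon
  push_neg at hcon
  have hsa := Real.sq_sqrt ha
  have hsn := Real.sqrt_nonneg a
  nlinarith [mul_le_mul_of_nonneg_left h ht, sq_nonneg (t - Real.sqrt a), sq_nonneg t]

lemma chain_est {V : Type*} [Fintype V] [DecidableEq V] (ω : V → V → ℝ) (hnn : ∀ x y, 0 ≤ ω x y)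
    (u : V → ℝ) (s q w Wv : ℝ)
    (hs : ∀ z, u z ≤ s) (hq : 0 ≤ q) (hw : 0 < w)
    (hW : ∀ x, ∑ y, ω x y ≤ Wv)
    (n : ℕ) (p : ℕ → V)
    (hedge : ∀ i < n, w ≤ ω (p i) (p (i + 1)))
    (hlap : ∀ i < n, -q ≤ ∑ z, ω (p i) z * (u z - u (p i))) :
    s - u (p n) ≤ (1 + Wv / w) ^ n * (s - u (p 0)) + n * (1 + Wv / w) ^ n * (q / w) := by
  have hWv : 0 ≤ Wv := le_trans (Finset.sum_nonneg fun y _ => hnn (p 0) y) (hW (p 0))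
  set R : ℝ := 1 + Wv / w with hR
  have hR1 : 1 ≤ R := by
    rw [hR]; linarith [div_nonneg hWv hw.le]
  induction n with
  | zero => simp
  | succ n ih =>
    have hedge' : ∀ i < n, w ≤ ω (p i) (p (i + 1)) := fun i hi => hedge i (by omega)
    have hlap' : ∀ i < n, -q ≤ ∑ z, ω (p i) z * (u z - u (p i)) := fun i hi => hlap i (by omega)
    have ihn := ih hedge' hlap'
    set x := p n with hx
    set y := p (n + 1) with hy
    have hA : 0 ≤ s - u x := sub_nonneg.mpr (hs x)
    have hsplit : ∑ z ∈ Finset.univ.erase y, ω x z * (u z - u x) + ω x y * (u y - u x)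
        = ∑ z, ω x z * (u z - u x) := Finset.sum_erase_add _ _ (Finset.mem_univ y)
    have herasebd : ∑ z ∈ Finset.univ.erase y, ω x z * (u z - u x) ≤ Wv * (s - u x) := by
      calc ∑ z ∈ Finset.univ.erase y, ω x z * (u z - u x)
          ≤ ∑ z ∈ Finset.univ.erase y, ω x z * (s - u x) := by
            apply Finset.sum_le_sum
            intro z _
            exact mul_le_mul_of_nonneg_left (by linarith [hs z]) (hnn x z)
        _ = (∑ z ∈ Finset.univ.erase y, ω x z) * (s - u x) := by rw [Finset.sum_mul]
        _ ≤ Wv * (s - u x) := by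
            apply mul_le_mul_of_nonneg_right _ hA
            calc ∑ z ∈ Finset.univ.erase y, ω x z ≤ ∑ z, ω x z :=
                  Finset.sum_le_sum_of_subset_of_nonneg (Finset.erase_subset _ _)
                    (fun z _ _ => hnn x z)
              _ ≤ Wv := hW x
    have hlapn := hlap n (by omega)
    have hedgen := hedge n (by omega)
    have hkey : ω x y * (u y - u x) ≥ -(q + Wv * (s - u x)) := by
      have := hsplit
      nlinarith [herasebd]
    have hstep : w * (u x - u y) ≤ q + Wv * (s - u x) := by
      rcases le_or_gt (u x) (u y) with hle | hlt
      · nlinarith [mul_nonneg hWv hA]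
      · have h1 : ω x y * (u x - u y) ≤ q + Wv * (s - u x) := by nlinarith
        nlinarith
    have hstep' : s - u y ≤ R * (s - u x) + q / w := by
      have : u x - u y ≤ (q + Wv * (s - u x)) / w := by
        rw [le_div_iff₀ hw]; linarith [hstep]
      have hexp : R * (s - u x) + q / w = (s - u x) + (q + Wv * (s - u x)) / w := by
        rw [hR]; field_simp; ring
      rw [hexp]; linarith
    have hpow : (1 : ℝ) ≤ R ^ n := one_le_pow₀ hR1
    have hRn1 : R ^ (n + 1) = R * R ^ n := by ring
    have hqw : 0 ≤ q / w := div_nonneg hq hw.le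
    push_cast
    rw [hRn1]
    have ha0 : 0 ≤ s - u (p 0) := sub_nonneg.mpr (hs (p 0))
    have h1 : (1:ℝ) ≤ R * R ^ n := by nlinarith
    nlinarith [mul_le_mul_of_nonneg_left ihn (by linarith : (0:ℝ) ≤ R),
      mul_nonneg (sub_nonneg.mpr h1) hqw]

set_option maxHeartbeats 2000000 in
/-- A priori estimate for the Kazdan–Warner equation `−Δu = h e^u − c`. -/
theorem kazdan_warner_a_priori {V : Type*} [Fintype V] [Nonempty V]
    (ω : V → V → ℝ) (μ : V → ℝ)
    (hsymm : ∀ x y, ω x y = ω y x)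
    (hnonneg : ∀ x y, 0 ≤ ω x y)
    (hconn : graphConn ω)
    (hμ : ∀ x, 0 < μ x)
    (h : V → ℝ) (c : ℝ)
    (h1 : 0 < c → ∃ x, 0 < h x)
    (h2 : c = 0 → (∃ x, 0 < h x) ∧ (∃ x, h x < 0) ∧ graphInt μ h < 0)
    (h3 : c < 0 → ∃ x, h x < 0) :
    ∃ C > 0, ∀ u : V → ℝ,
      (∀ x, -graphLap ω μ u x = h x * Real.exp (u x) - c) →
      ∀ x, |u x| ≤ C := by
  classical
  -- basic constants
  set Vol : ℝ := ∑ x, μ x with hVoldef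
  have hVol : 0 < Vol := Finset.sum_pos (fun x _ => hμ x) univ_nonempty
  have hμVol : ∀ x, μ x ≤ Vol :=
    fun x => Finset.single_le_sum (fun i _ => (hμ i).le) (mem_univ x)
  -- H = max |h|
  obtain ⟨b, hb⟩ : ∃ b, h b ≠ 0 := by
    rcases lt_trichotomy c 0 with hc | hc | hc
    · obtain ⟨x, hx⟩ := h3 hc; exact ⟨x, ne_of_lt hx⟩
    · obtain ⟨⟨x, hx⟩, _, _⟩ := h2 hc; exact ⟨x, ne_of_gt hx⟩
    · obtain ⟨x, hx⟩ := h1 hc; exact ⟨x, ne_of_gt hx⟩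
  obtain ⟨H, hH⟩ : ∃ H : ℝ, ∀ x, |h x| ≤ H :=
    ⟨(Finset.univ.image fun x => |h x|).max' ((univ_nonempty).image _), fun x =>
      Finset.le_max' _ _ (Finset.mem_image_of_mem (fun x => |h x|) (mem_univ x))⟩
  have hHpos : 0 < H := lt_of_lt_of_le (abs_pos.mpr hb) (hH b)
  -- η = min |h| over nonzero
  have hbmem : b ∈ Finset.univ.filter (fun x => h x ≠ 0) := by simp [hb]
  obtain ⟨η, hηpos, hη⟩ : ∃ η : ℝ, 0 < η ∧ ∀ x, h x ≠ 0 → η ≤ |h x| := by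
    refine ⟨(Finset.univ.filter (fun x => h x ≠ 0)).inf' (show (Finset.univ.filter (fun x => h x ≠ 0)).Nonempty from ⟨b, hbmem⟩) (fun x => |h x|), ?_, ?_⟩
    · rw [Finset.lt_inf'_iff]
      intro y hy
      simp only [Finset.mem_filter] at hy
      exact abs_pos.mpr hy.2
    · exact fun x hx => Finset.inf'_le _ (by simp [hx])
  -- Wv
  set Wv : ℝ := ∑ x, ∑ y, ω x y with hWvdef
  have hWrow : ∀ x, ∑ y, ω x y ≤ Wv := fun x =>
    Finset.single_le_sum (fun i _ => Finset.sum_nonneg fun y _ => hnonneg i y) (mem_univ x)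
  have hWv0 : 0 ≤ Wv := le_trans (Finset.sum_nonneg fun y _ => hnonneg b y) (hWrow b)
  -- μm
  obtain ⟨μm, hμm, hμmle⟩ : ∃ μm : ℝ, 0 < μm ∧ ∀ x, μm ≤ μ x := by
    refine ⟨Finset.univ.inf' univ_nonempty μ, ?_, fun x => Finset.inf'_le _ (mem_univ x)⟩
    rw [Finset.lt_inf'_iff]; exact fun y _ => hμ y
  -- w0
  obtain ⟨w0, hw0pos, hw0le⟩ : ∃ w0 : ℝ, 0 < w0 ∧ ∀ a b', 0 < ω a b' → w0 ≤ ω a b' := by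
    have hmem : ∀ a b', 0 < ω a b' →
        (a, b') ∈ (Finset.univ ×ˢ Finset.univ).filter (fun ab : V × V => 0 < ω ab.1 ab.2) := by
      intro a b' hab
      simp only [Finset.mem_filter, Finset.mem_product, Finset.mem_univ, true_and]
      exact hab
    by_cases hne : ((Finset.univ ×ˢ Finset.univ).filter
        (fun ab : V × V => 0 < ω ab.1 ab.2)).Nonempty
    · refine ⟨((Finset.univ ×ˢ Finset.univ).filter
        (fun ab : V × V => 0 < ω ab.1 ab.2)).inf' hne (fun ab => ω ab.1 ab.2), ?_, ?_⟩
      · rw [Finset.lt_inf'_iff]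
        intro ab hab
        simp only [Finset.mem_filter] at hab
        exact hab.2
      · intro a b' hab
        exact Finset.inf'_le _ (hmem a b' hab)
    · refine ⟨1, one_pos, ?_⟩
      intro a b' hab
      exact absurd ⟨(a, b'), hmem a b' hab⟩ hne
  -- chains
  choose! cm cp hcp0 hcpm hcpe using hconn
  set M : ℕ := (Finset.univ ×ˢ Finset.univ).sup (fun ab : V × V => cm ab.1 ab.2) with hMdef
  have hMle : ∀ a b', cm a b' ≤ M := fun a b' =>
    Finset.le_sup (f := fun ab : V × V => cm ab.1 ab.2) (b := (a, b'))
      (Finset.mem_product.mpr ⟨mem_univ a, mem_univ b'⟩)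
  set R : ℝ := 1 + Wv / w0 with hRdef
  have hR1 : 1 ≤ R := by rw [hRdef]; linarith [div_nonneg hWv0 hw0pos.le]
  set Kc : ℝ := max ((M : ℝ) * R ^ M / w0) 1 with hKcdef
  have hKc1 : 1 ≤ Kc := le_max_right _ _
  have hKc0 : 0 < Kc := lt_of_lt_of_le one_pos hKc1
  -- chain bound specialized
  have hchainM : ∀ (u : V → ℝ) (s q : ℝ), (∀ z, u z ≤ s) → 0 ≤ q →
      ∀ (n : ℕ) (p : ℕ → V), n ≤ M → u (p 0) = s →
      (∀ i < n, 0 < ω (p i) (p (i + 1))) →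
      (∀ i < n, -q ≤ ∑ z, ω (p i) z * (u z - u (p i))) →
      s - u (p n) ≤ Kc * q := by
    intro u s q hs hq n p hnM hp0 hedge hlap
    have := chain_est ω hnonneg u s q w0 Wv hs hq hw0pos hWrow n p
      (fun i hi => hw0le _ _ (hedge i hi)) hlap
    rw [← hRdef, hp0, sub_self, mul_zero, zero_add] at this
    have hpown : R ^ n ≤ R ^ M := pow_le_pow_right₀ hR1 hnM
    have hqw : 0 ≤ q / w0 := div_nonneg hq hw0pos.le
    have h2 : (n : ℝ) * R ^ n * (q / w0) ≤ (M : ℝ) * R ^ M * (q / w0) := by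
      apply mul_le_mul_of_nonneg_right _ hqw
      have hn' : (n : ℝ) ≤ (M : ℝ) := by exact_mod_cast hnM
      have : (0:ℝ) ≤ (n:ℝ) := by positivity
      nlinarith [one_le_pow₀ hR1 (n := n), one_le_pow₀ hR1 (n := M)]
    have h3 : (M : ℝ) * R ^ M * (q / w0) ≤ Kc * q := by
      rw [hKcdef]
      have : (M : ℝ) * R ^ M * (q / w0) = ((M : ℝ) * R ^ M / w0) * q := by ring
      rw [this]
      exact mul_le_mul_of_nonneg_right (le_max_left _ _) hq
    linarith
  
  -- solution facts
  have hH0 : 0 ≤ H := le_trans (abs_nonneg (h b)) (hH b)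
  have hsol : ∀ u : V → ℝ, (∀ x, -graphLap ω μ u x = h x * Real.exp (u x) - c) →
      ∀ x, ∑ z, ω x z * (u z - u x) = μ x * (c - h x * Real.exp (u x)) := by
    intro u hu x
    have e := hu x
    simp only [graphLap] at e
    have hμx : (μ x) ≠ 0 := (hμ x).ne'
    have e2 : (1 / μ x) * ∑ z, ω x z * (u z - u x) = c - h x * Real.exp (u x) := by
      linarith [e]
    calc ∑ z, ω x z * (u z - u x)
        = μ x * ((1 / μ x) * ∑ z, ω x z * (u z - u x)) := by field_simp
      _ = μ x * (c - h x * Real.exp (u x)) := by rw [e2]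
  have hint : ∀ u : V → ℝ,
      (∀ x, ∑ z, ω x z * (u z - u x) = μ x * (c - h x * Real.exp (u x))) →
      ∑ x, h x * Real.exp (u x) * μ x = c * Vol := by
    intro u hu
    have hzero : ∑ x, ∑ z, ω x z * (u z - u x) = 0 := by
      have h1 : ∑ x : V, ∑ z : V, ω x z * u z = ∑ x : V, ∑ z : V, ω x z * u x := by
        rw [Finset.sum_comm]
        exact Finset.sum_congr rfl fun z _ => Finset.sum_congr rfl fun x _ => by rw [hsymm]
      calc ∑ x, ∑ z, ω x z * (u z - u x)
          = ∑ x : V, ((∑ z : V, ω x z * u z) - ∑ z : V, ω x z * u x) := by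
            apply Finset.sum_congr rfl; intro x _
            rw [← Finset.sum_sub_distrib]
            exact Finset.sum_congr rfl fun z _ => by ring
        _ = (∑ x : V, ∑ z : V, ω x z * u z) - ∑ x : V, ∑ z : V, ω x z * u x :=
            Finset.sum_sub_distrib _ _
        _ = 0 := by rw [h1, sub_self]
    have h2 : ∑ x, μ x * (c - h x * Real.exp (u x)) = 0 := by
      rw [← hzero]; exact Finset.sum_congr rfl fun x _ => (hu x).symm
    have h3 : ∑ x, μ x * (c - h x * Real.exp (u x))
        = c * Vol - ∑ x, h x * Real.exp (u x) * μ x := by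
      rw [hVoldef, Finset.mul_sum, ← Finset.sum_sub_distrib]
      exact Finset.sum_congr rfl fun x _ => by ring
    rw [h3] at h2
    linarith
  have hmax : ∀ u : V → ℝ, ∃ x₀, ∀ z, u z ≤ u x₀ := by
    intro u
    obtain ⟨x₀, -, hx₀⟩ := Finset.exists_max_image Finset.univ u univ_nonempty
    exact ⟨x₀, fun z => hx₀ z (mem_univ z)⟩
  have hptwise : ∀ u : V → ℝ, ∀ s : ℝ, (∀ z, u z ≤ s) → ∀ x,
      ∑ z, ω x z * (u z - u x) ≤ Wv * (s - u x) := by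
    intro u s hs x
    calc ∑ z, ω x z * (u z - u x) ≤ ∑ z, ω x z * (s - u x) :=
        Finset.sum_le_sum fun z _ => mul_le_mul_of_nonneg_left (by linarith [hs z]) (hnonneg x z)
      _ = (∑ z, ω x z) * (s - u x) := by rw [Finset.sum_mul]
      _ ≤ Wv * (s - u x) := mul_le_mul_of_nonneg_right (hWrow x) (by linarith [hs x])
  set D : ℝ := Wv / μm with hDdef
  have hD0 : 0 ≤ D := div_nonneg hWv0 hμm.le
  have hDμ : μm * D = Wv := by rw [hDdef]; field_simp
  have hU0 : ∀ u : V → ℝ,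
      (∀ x, ∑ z, ω x z * (u z - u x) = μ x * (c - h x * Real.exp (u x))) →
      ∀ s, (∀ z, u z ≤ s) → ∀ x,
      c - h x * Real.exp (u x) ≤ D * (s - u x) := by
    intro u hu s hs x
    have hpt := hptwise u s hs x
    rw [hu x] at hpt
    have hDs : Wv * (s - u x) = μm * (D * (s - u x)) := by rw [← hDμ]; ring
    have hprod : 0 ≤ (μ x - μm) * (D * (s - u x)) :=
      mul_nonneg (sub_nonneg.mpr (hμmle x)) (mul_nonneg hD0 (sub_nonneg.mpr (hs x)))
    have t1 : μ x * (c - h x * Real.exp (u x)) ≤ μ x * (D * (s - u x)) := by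
      nlinarith [hpt]
    exact le_of_mul_le_mul_left t1 (hμ x)
  have hU2 : ∀ u : V → ℝ,
      (∀ x, ∑ z, ω x z * (u z - u x) = μ x * (c - h x * Real.exp (u x))) →
      ∀ s, (∀ z, u z ≤ s) → ∀ x,
      max (-h x) 0 * Real.exp (u x) ≤ H + |c| + D * max s 0 := by
    intro u hu s hs x
    have hmax0 : 0 ≤ D * max s 0 := mul_nonneg hD0 (le_max_right _ _)
    rcases le_or_gt 0 (h x) with hpos | hneg
    · have : max (-h x) 0 = 0 := max_eq_right (by linarith)
      rw [this, zero_mul]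
      positivity
    · have hmx : max (-h x) 0 = -h x := max_eq_left (by linarith)
      rw [hmx]
      have hu0 := hU0 u hu s hs x
      rcases le_or_gt (u x) 0 with hux | hux
      · have he1 : Real.exp (u x) ≤ 1 := Real.exp_le_one_iff.mpr hux
        have : -h x ≤ H := by have := hH x; rw [abs_of_neg hneg] at this; linarith
        nlinarith [Real.exp_pos (u x), abs_nonneg c]
      · have hss : s - u x ≤ max s 0 := by
          have : u x ≤ s := hs x
          rcases le_or_gt s 0 with h'|h'
          · linarith [le_max_right s 0]
          · rw [max_eq_left h'.le]; linarith
        have : D * (s - u x) ≤ D * max s 0 := mul_le_mul_of_nonneg_left hss hD0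
        nlinarith [neg_abs_le c, hH0]
  -- upper bound
  obtain ⟨S, hS0, hS⟩ : ∃ S : ℝ, 0 ≤ S ∧ ∀ u : V → ℝ,
      (∀ x, ∑ z, ω x z * (u z - u x) = μ x * (c - h x * Real.exp (u x))) →
      ∀ x, u x ≤ S := by
    set K2 : ℝ := Kc * (Vol * |c|) with hK2def
    have hK20 : 0 ≤ K2 := by positivity
    set S1 : ℝ := K2 + Real.log ((D * K2 + |c|) / η) with hS1def
    set α : ℝ := η * μm * Real.exp (-K2) with hαdef
    have hα : 0 < α := by positivity
    set β : ℝ := |c| * Vol + (H + |c|) * Vol with hβdef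
    have hβ0 : 0 ≤ β := by positivity
    set γ : ℝ := D * Vol with hγdef
    have hγ0 : 0 ≤ γ := by positivity
    set S2 : ℝ := 4 * γ / α + Real.sqrt (4 * β / α) with hS2def
    refine ⟨max (max S1 S2) 0, le_max_right _ _, ?_⟩
    intro u hu x
    obtain ⟨x₀, hx₀⟩ := hmax u
    set s := u x₀ with hsdef
    refine le_trans (hx₀ x) ?_
    -- find xs with h xs ≠ 0 and s - u xs ≤ K2
    obtain ⟨xs, hxs, hxsK⟩ : ∃ xs, h xs ≠ 0 ∧ s - u xs ≤ K2 := by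
      by_cases hx0 : h x₀ ≠ 0
      · exact ⟨x₀, hx0, by simp [hsdef, hK20]⟩
      · push_neg at hx0
        have hne : x₀ ≠ b := fun hEq => hb (hEq ▸ hx0)
        have hp0 : cp x₀ b 0 = x₀ := hcp0 x₀ b hne
        have hpn : cp x₀ b (cm x₀ b) = b := hcpm x₀ b hne
        have hpe : ∀ i < cm x₀ b, 0 < ω (cp x₀ b i) (cp x₀ b (i + 1)) := hcpe x₀ b hne
        have hex : ∃ i, h (cp x₀ b i) ≠ 0 := ⟨cm x₀ b, by rw [hpn]; exact hb⟩
        obtain ⟨k, hk, hkmin⟩ : ∃ k, (h (cp x₀ b k) ≠ 0) ∧ ∀ j < k, h (cp x₀ b j) = 0 :=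
          ⟨Nat.find hex, Nat.find_spec hex, fun j hj => not_not.mp (Nat.find_min hex hj)⟩
        have hkn : k ≤ cm x₀ b := by
          by_contra hgt
          push_neg at hgt
          have hcontra := hkmin (cm x₀ b) hgt
          rw [hpn] at hcontra
          exact hb hcontra
        have hlapb : ∀ i < k,
            -(Vol * |c|) ≤ ∑ z, ω (cp x₀ b i) z * (u z - u (cp x₀ b i)) := by
          intro i hi
          have hhi : h (cp x₀ b i) = 0 := hkmin i hi
          rw [hu (cp x₀ b i), hhi]
          have := hμ (cp x₀ b i)
          have := hμVol (cp x₀ b i)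
          nlinarith [abs_nonneg c, neg_abs_le c, le_abs_self c]
        have hcb := hchainM u s (Vol * |c|) hx₀ (by positivity) k (cp x₀ b)
          (le_trans hkn (hMle x₀ b)) (by rw [hp0])
          (fun i hi => hpe i (lt_of_lt_of_le hi hkn)) hlapb
        exact ⟨cp x₀ b k, hk, hcb⟩
    rcases hxs.lt_or_gt with hneg | hpos
    · -- h xs < 0
      have hu0 := hU0 u hu s hx₀ xs
      have hηxs : η ≤ -h xs := by
        have := hη xs hxs; rwa [abs_of_neg hneg] at this
      have hkey : η * Real.exp (u xs) ≤ D * K2 + |c| := by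
        have hE := Real.exp_pos (u xs)
        nlinarith [neg_abs_le c, mul_le_mul_of_nonneg_left hxsK hD0]
      have hpos2 : 0 < (D * K2 + |c|) / η := by
        apply div_pos _ hηpos
        nlinarith [Real.exp_pos (u xs)]
      have hsk : Real.exp (s - K2) ≤ (D * K2 + |c|) / η := by
        have hE2 : Real.exp (s - K2) ≤ Real.exp (u xs) := Real.exp_le_exp.mpr (by linarith)
        rw [le_div_iff₀ hηpos]
        nlinarith [Real.exp_pos (u xs)]
      have hsS1 : s ≤ S1 := by
        have := (Real.le_log_iff_exp_le hpos2).mpr hsk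
        rw [hS1def]; linarith
      exact le_trans hsS1 (le_trans (le_max_left _ _) (le_max_left _ _))
    · -- h xs > 0
      have hsplit : h xs * Real.exp (u xs) * μ xs
          ≤ c * Vol + ∑ x, max (-h x) 0 * Real.exp (u x) * μ x := by
        have hid := hint u hu
        have hsp : (∑ x ∈ Finset.univ.erase xs, h x * Real.exp (u x) * μ x)
            + h xs * Real.exp (u xs) * μ xs = ∑ x, h x * Real.exp (u x) * μ x :=
          Finset.sum_erase_add _ _ (mem_univ xs)
        have hlow : -(∑ x, max (-h x) 0 * Real.exp (u x) * μ x)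
            ≤ ∑ x ∈ Finset.univ.erase xs, h x * Real.exp (u x) * μ x := by
          calc -(∑ x, max (-h x) 0 * Real.exp (u x) * μ x)
              ≤ -(∑ x ∈ Finset.univ.erase xs, max (-h x) 0 * Real.exp (u x) * μ x) := by
                apply neg_le_neg
                exact Finset.sum_le_sum_of_subset_of_nonneg (Finset.erase_subset _ _)
                  (fun z _ _ => mul_nonneg
                    (mul_nonneg (le_max_right _ _) (Real.exp_pos _).le) (hμ z).le)
            _ = ∑ x ∈ Finset.univ.erase xs, -(max (-h x) 0 * Real.exp (u x) * μ x) := by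
                rw [Finset.sum_neg_distrib]
            _ ≤ ∑ x ∈ Finset.univ.erase xs, h x * Real.exp (u x) * μ x := by
                apply Finset.sum_le_sum
                intro z _
                have h1 : (0:ℝ) ≤ (-h z ⊔ 0) + h z := by
                  have := le_max_left (-h z) 0; linarith
                have hterm : 0 ≤ ((-h z ⊔ 0) + h z) * (Real.exp (u z) * μ z) :=
                  mul_nonneg h1 (mul_nonneg (Real.exp_pos _).le (hμ z).le)
                nlinarith [hterm]
        linarith
      have hsum2 : ∑ x, max (-h x) 0 * Real.exp (u x) * μ x
          ≤ (H + |c| + D * max s 0) * Vol := by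
        calc ∑ x, max (-h x) 0 * Real.exp (u x) * μ x
            ≤ ∑ x, (H + |c| + D * max s 0) * μ x :=
              Finset.sum_le_sum fun x _ =>
                mul_le_mul_of_nonneg_right (hU2 u hu s hx₀ x) (hμ x).le
          _ = (H + |c| + D * max s 0) * Vol := by rw [← Finset.mul_sum]
      have hηxs : η ≤ h xs := by
        have := hη xs hxs; rwa [abs_of_pos hpos] at this
      have hE : Real.exp (s - K2) ≤ Real.exp (u xs) := Real.exp_le_exp.mpr (by linarith)
      have hLB : α * Real.exp s ≤ h xs * Real.exp (u xs) * μ xs := by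
        have hexpeq : Real.exp (-K2) * Real.exp s = Real.exp (s - K2) := by
          rw [← Real.exp_add]; ring_nf
        have h1 : α * Real.exp s = η * μm * Real.exp (s - K2) := by
          rw [hαdef, ← hexpeq]; ring
        rw [h1]
        have h2 : η * μm * Real.exp (s - K2) ≤ η * μm * Real.exp (u xs) :=
          mul_le_mul_of_nonneg_left hE (by positivity)
        refine le_trans h2 ?_
        have hmm : η * μm ≤ h xs * μ xs :=
          mul_le_mul hηxs (hμmle xs) hμm.le (by linarith)
        nlinarith [mul_le_mul_of_nonneg_right hmm (Real.exp_pos (u xs)).le]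
      have hmain : α * Real.exp s ≤ c * Vol + (H + |c| + D * max s 0) * Vol := by linarith
      rcases le_or_gt s 0 with hs0 | hs0
      · exact le_trans hs0 (le_max_right _ _)
      · have hms : max s 0 = s := max_eq_left hs0.le
        rw [hms] at hmain
        have hcv : c * Vol ≤ |c| * Vol := mul_le_mul_of_nonneg_right (le_abs_self c) hVol.le
        have hexpand : (H + |c| + D * s) * Vol = (H + |c|) * Vol + D * Vol * s := by ring
        have h2 : α * Real.exp s ≤ β + γ * s := by
          rw [hβdef, hγdef]
          rw [hexpand] at hmain
          linarith
        have hsq : s ^ 2 ≤ 4 * β / α + (4 * γ / α) * s := by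
          have hexp4 := exp_ge_sq_div_four hs0.le
          rw [div_mul_eq_mul_div, ← add_div, le_div_iff₀ hα]
          nlinarith
        have hqb := quad_bound hs0.le (by positivity) (by positivity) hsq
        have hfin : s ≤ S2 := by rw [hS2def]; linarith
        exact le_trans hfin (le_trans (le_max_right _ _) (le_max_left _ _))
  
  have hmin : ∀ u : V → ℝ, ∃ x₁, ∀ z, u x₁ ≤ u z := by
    intro u
    obtain ⟨x₁, -, hx₁⟩ := Finset.exists_min_image Finset.univ u univ_nonempty
    exact ⟨x₁, fun z => hx₁ z (mem_univ z)⟩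
  have hoscgen : ∀ u : V → ℝ,
      (∀ x, ∑ z, ω x z * (u z - u x) = μ x * (c - h x * Real.exp (u x))) →
      ∀ x₀, (∀ z, u z ≤ u x₀) → ∀ q, 0 ≤ q →
      (∀ w, -q ≤ μ w * (c - h w * Real.exp (u w))) →
      ∀ y, u x₀ - u y ≤ Kc * q := by
    intro u hu x₀ hx₀ q hq hqb y
    by_cases hyx : y = x₀
    · subst hyx
      rw [sub_self]
      positivity
    · have hne : x₀ ≠ y := fun hEq => hyx hEq.symm
      have hcb := hchainM u (u x₀) q hx₀ hq (cm x₀ y) (cp x₀ y) (hMle x₀ y)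
        (by rw [hcp0 x₀ y hne]) (hcpe x₀ y hne)
        (fun i _ => by rw [hu (cp x₀ y i)]; exact hqb _)
      rwa [hcpm x₀ y hne] at hcb
  -- lower bound
  obtain ⟨L, hL⟩ : ∃ L : ℝ, ∀ u : V → ℝ,
      (∀ x, ∑ z, ω x z * (u z - u x) = μ x * (c - h x * Real.exp (u x))) →
      ∀ x, L ≤ u x := by
    rcases lt_trichotomy c 0 with hc | hc | hc
    · -- c < 0 : minimum principle
      refine ⟨Real.log (-c / H), ?_⟩
      intro u hu x
      obtain ⟨x₁, hx₁⟩ := hmin u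
      have hmin1 : 0 ≤ ∑ z, ω x₁ z * (u z - u x₁) :=
        Finset.sum_nonneg fun z _ => mul_nonneg (hnonneg x₁ z) (by linarith [hx₁ z])
      rw [hu x₁] at hmin1
      have hce : 0 ≤ c - h x₁ * Real.exp (u x₁) := by
        have h0 : μ x₁ * 0 ≤ μ x₁ * (c - h x₁ * Real.exp (u x₁)) := by linarith
        exact le_of_mul_le_mul_left (by linarith [h0]) (hμ x₁)
      have hhx1 : h x₁ < 0 := by
        by_contra hge
        push_neg at hge
        nlinarith [Real.exp_pos (u x₁), mul_nonneg hge (Real.exp_pos (u x₁)).le]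
      have hHe : -c / H ≤ Real.exp (u x₁) := by
        rw [div_le_iff₀ hHpos]
        have hhH : -h x₁ ≤ H := by
          have := hH x₁; rw [abs_of_neg hhx1] at this; linarith
        nlinarith [Real.exp_pos (u x₁)]
      have hlog : Real.log (-c / H) ≤ u x₁ := by
        rw [Real.log_le_iff_le_exp (div_pos (by linarith) hHpos)]
        exact hHe
      exact le_trans hlog (hx₁ x)
    · -- c = 0
      subst hc
      obtain ⟨-, -, hI⟩ := h2 rfl
      have hI' : ∑ x, h x * μ x < 0 := by simpa [graphInt] using hI
      refine ⟨Real.log ((-(∑ x, h x * μ x)) / (Kc * Vol * H * (H * Vol)))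
        - Kc * (Vol * (H * Real.exp S)), ?_⟩
      intro u hu x
      obtain ⟨x₀, hx₀⟩ := hmax u
      have hq0 : (0:ℝ) ≤ Vol * (H * Real.exp (u x₀)) := by positivity
      have hqb : ∀ w, -(Vol * (H * Real.exp (u x₀))) ≤ μ w * (0 - h w * Real.exp (u w)) := by
        intro w
        have e1 : h w * Real.exp (u w) ≤ H * Real.exp (u x₀) := by
          have ha := le_abs_self (h w)
          have hb' := hH w
          have he := Real.exp_le_exp.mpr (hx₀ w)
          nlinarith [Real.exp_pos (u w), Real.exp_pos (u x₀)]
        have e2 : μ w * (h w * Real.exp (u w)) ≤ μ w * (H * Real.exp (u x₀)) :=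
          mul_le_mul_of_nonneg_left e1 (hμ w).le
        have e3 : μ w * (H * Real.exp (u x₀)) ≤ Vol * (H * Real.exp (u x₀)) :=
          mul_le_mul_of_nonneg_right (hμVol w) (by positivity)
        nlinarith
      have hosc := hoscgen u hu x₀ hx₀ (Vol * (H * Real.exp (u x₀))) hq0 hqb
      set P : ℝ := Kc * (Vol * (H * Real.exp (u x₀))) with hPdef
      have hP0 : 0 ≤ P := by positivity
      have hid := hint u hu
      rw [zero_mul] at hid
      have hterm : ∀ y, h y * Real.exp (u y) * μ y
          ≤ Real.exp (u x₀) * ((h y + P * max (-h y) 0) * μ y) := by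
        intro y
        rcases le_or_gt 0 (h y) with hy | hy
        · rw [max_eq_right (neg_nonpos.mpr hy), mul_zero, add_zero]
          have he := Real.exp_le_exp.mpr (hx₀ y)
          nlinarith [mul_nonneg (mul_nonneg hy (hμ y).le) (sub_nonneg.mpr he)]
        · rw [max_eq_left (by linarith : (0:ℝ) ≤ -h y)]
          have hup : Real.exp (u x₀ - P) ≤ Real.exp (u y) :=
            Real.exp_le_exp.mpr (by linarith [hosc y])
          have hexpeq : Real.exp (u x₀ - P) = Real.exp (u x₀) * Real.exp (-P) := by
            rw [← Real.exp_add]; ring_nf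
          have h1P : Real.exp (u x₀) * (1 - P) ≤ Real.exp (u x₀ - P) := by
            have hle := Real.add_one_le_exp (-P)
            have hEs := Real.exp_pos (u x₀)
            rw [hexpeq]
            nlinarith
          have t1 : h y * Real.exp (u y) ≤ h y * Real.exp (u x₀ - P) := by nlinarith
          have t2 : h y * Real.exp (u x₀ - P) ≤ h y * (Real.exp (u x₀) * (1 - P)) := by
            nlinarith
          have hgoal : h y * Real.exp (u y) ≤ Real.exp (u x₀) * (h y + P * -h y) := by
            nlinarith
          nlinarith [mul_le_mul_of_nonneg_right hgoal (hμ y).le]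
      have hsum : (0:ℝ) ≤ Real.exp (u x₀) * ((∑ y, h y * μ y) + P * (H * Vol)) := by
        have hs1 : ∑ y, h y * Real.exp (u y) * μ y
            ≤ ∑ y, Real.exp (u x₀) * ((h y + P * max (-h y) 0) * μ y) :=
          Finset.sum_le_sum fun y _ => hterm y
        rw [hid] at hs1
        have hrw : ∑ y, Real.exp (u x₀) * ((h y + P * max (-h y) 0) * μ y)
            = Real.exp (u x₀) * ((∑ y, h y * μ y) + P * ∑ y, max (-h y) 0 * μ y) := by
          rw [← Finset.mul_sum]
          congr 1
          rw [Finset.mul_sum, ← Finset.sum_add_distrib]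
          exact Finset.sum_congr rfl fun y _ => by ring
        rw [hrw] at hs1
        have hmb : ∑ y, max (-h y) 0 * μ y ≤ H * Vol := by
          calc ∑ y, max (-h y) 0 * μ y ≤ ∑ y, H * μ y := by
                apply Finset.sum_le_sum
                intro y _
                apply mul_le_mul_of_nonneg_right _ (hμ y).le
                exact max_le (le_trans (neg_le_abs _) (hH y)) hH0
            _ = H * Vol := by rw [← Finset.mul_sum]
        nlinarith [mul_nonneg (mul_nonneg (Real.exp_pos (u x₀)).le hP0)
          (sub_nonneg.mpr hmb)]
      have hX : 0 ≤ (∑ y, h y * μ y) + P * (H * Vol) := by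
        by_contra hneg
        push_neg at hneg
        nlinarith [mul_pos (Real.exp_pos (u x₀)) (neg_pos.mpr hneg)]
      have hes : (-(∑ x, h x * μ x)) / (Kc * Vol * H * (H * Vol)) ≤ Real.exp (u x₀) := by
        rw [div_le_iff₀ (by positivity)]
        have hPexp : P * (H * Vol) = Real.exp (u x₀) * (Kc * Vol * H * (H * Vol)) := by
          rw [hPdef]; ring
        nlinarith [hX]
      have hslog : Real.log ((-(∑ x, h x * μ x)) / (Kc * Vol * H * (H * Vol))) ≤ u x₀ := by
        rw [Real.log_le_iff_le_exp (div_pos (by linarith) (by positivity))]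
        exact hes
      have hP2 : P ≤ Kc * (Vol * (H * Real.exp S)) := by
        have hsS : Real.exp (u x₀) ≤ Real.exp S := Real.exp_le_exp.mpr (hS u hu x₀)
        rw [hPdef]
        have h6 : Vol * (H * Real.exp (u x₀)) ≤ Vol * (H * Real.exp S) := by
          nlinarith [mul_nonneg (mul_nonneg hVol.le hH0) (sub_nonneg.mpr hsS)]
        exact mul_le_mul_of_nonneg_left h6 hKc0.le
      have := hosc x
      linarith
    · -- c > 0
      refine ⟨Real.log (c / H) - Kc * (Vol * (|c| + H * Real.exp S)), ?_⟩
      intro u hu x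
      obtain ⟨x₀, hx₀⟩ := hmax u
      have hq0 : (0:ℝ) ≤ Vol * (|c| + H * Real.exp S) := by positivity
      have hqb : ∀ w, -(Vol * (|c| + H * Real.exp S)) ≤ μ w * (c - h w * Real.exp (u w)) := by
        intro w
        have e1 : h w * Real.exp (u w) ≤ H * Real.exp S := by
          have ha := le_abs_self (h w)
          have hb' := hH w
          have he := Real.exp_le_exp.mpr (hS u hu w)
          nlinarith [Real.exp_pos (u w), Real.exp_pos S]
        have e2 : c - h w * Real.exp (u w) ≥ -(|c| + H * Real.exp S) := by
          have := neg_abs_le c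
          linarith
        have e3 : μ w * (c - h w * Real.exp (u w)) ≥ μ w * (-(|c| + H * Real.exp S)) :=
          mul_le_mul_of_nonneg_left e2 (hμ w).le
        have e4 : μ w * (-(|c| + H * Real.exp S)) ≥ Vol * (-(|c| + H * Real.exp S)) := by
          have h5 : -(|c| + H * Real.exp S) ≤ 0 := neg_nonpos.mpr (by positivity)
          nlinarith [hμVol w]
        nlinarith
      have hosc := hoscgen u hu x₀ hx₀ (Vol * (|c| + H * Real.exp S)) hq0 hqb
      have hsl : Real.log (c / H) ≤ u x₀ := by
        have hid := hint u hu
        have hub : ∀ y, h y * Real.exp (u y) * μ y ≤ H * Real.exp (u x₀) * μ y := by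
          intro y
          have ha := le_abs_self (h y)
          have hb' := hH y
          have he := Real.exp_le_exp.mpr (hx₀ y)
          have k1 : h y * Real.exp (u y) ≤ H * Real.exp (u x₀) :=
            mul_le_mul (ha.trans hb') he (Real.exp_pos _).le hH0
          exact mul_le_mul_of_nonneg_right k1 (hμ y).le
        have hsum : c * Vol ≤ H * Real.exp (u x₀) * Vol := by
          rw [← hid]
          calc ∑ y, h y * Real.exp (u y) * μ y ≤ ∑ y, H * Real.exp (u x₀) * μ y :=
                Finset.sum_le_sum fun y _ => hub y
            _ = H * Real.exp (u x₀) * Vol := by rw [← Finset.mul_sum]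
        have hce : c / H ≤ Real.exp (u x₀) := by
          rw [div_le_iff₀ hHpos]
          nlinarith [hVol]
        rw [Real.log_le_iff_le_exp (div_pos hc hHpos)]
        exact hce
      linarith [hosc x]
  -- conclusion
  refine ⟨max (max |S| |L|) 1, lt_of_lt_of_le one_pos (le_max_right _ _), ?_⟩
  intro u hu x
  have hu' := hsol u hu
  have hup := hS u hu' x
  have hlo := hL u hu' x
  rw [abs_le]
  constructor
  · have h1' : -|L| ≤ L := neg_abs_le L
    have hC : |L| ≤ max (max |S| |L|) 1 := le_trans (le_max_right _ _) (le_max_left _ _)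
    linarith
  · have h1' : S ≤ |S| := le_abs_self S
    have hC : |S| ≤ max (max |S| |L|) 1 := le_trans (le_max_left _ _) (le_max_left _ _)
    linarith
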